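/- Let E be a real inner product space, let X ⊆ E be a nonempty convex set with diameter at most R > 0 (i.e., ‖u - v‖ ≤ R for all u, v ∈ X), let α > 0 and L > 0 with α ≤ 1/L. For each i = 1, …, K let s_i : E → ℝ be a convex differentiable function whose gradient ∇s_i satisfies the descent inequality s_i(v) ≤ s_i(u) + ⟪∇s_i(u), v - u⟫ + (L/2)‖v - u‖² for all u, v ∈ E, let g_i : E → ℝ be convex, and set f_i := s_i + g_i. Let x*_0 ∈ X and, for each i = 1, …, K, let x*_i ∈ X be a minimizer of f_i over X, and set ω_i := ‖x*_i - x*_{i-1}‖. Let x_0 ∈ X and, for each i = 1, …, K, let x_i ∈ X be a minimizer over X of the map z ↦ g_i(z) + (1/(2α))‖z - (x_{i-1} - α∇s_i(x_{i-1}))‖². Then the dynamic regret satisfies ∑_{i=1}^K [f_i(x_i) - f_i(x*_i)] ≤ (1/(2α))‖x_0 - x*_0‖² + (R/α)∑_{i=1}^K ω_i + (1/(2α))∑_{i=1}^K ω_i². -/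

import Mathlib

open scoped RealInnerProductSpace

section Aux
variable {E : Type*} [NormedAddCommGroup E] [InnerProductSpace ℝ E]

/-- Gradient inequality for a convex differentiable function. -/
lemma aux_grad_ineq (s : E → ℝ) (hs : ConvexOn ℝ Set.univ s) (d p : E)
    (hd : HasFDerivAt s (innerSL ℝ d) p) (z : E) :
    s p + ⟪d, z - p⟫ ≤ s z := by
  have hcurve : HasDerivAt (fun t : ℝ => p + t • (z - p)) (z - p) 0 := by
    have h := ((hasDerivAt_id (0 : ℝ)).smul_const (z - p)).const_add p
    simpa using h
  have hφ : HasDerivAt (fun t : ℝ => s (p + t • (z - p))) ⟪d, z - p⟫ 0 := by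
    have hd' : HasFDerivAt s (innerSL ℝ d) ((fun t : ℝ => p + t • (z - p)) 0) := by
      simpa using hd
    have := hd'.comp_hasDerivAt 0 hcurve
    simpa [Function.comp_def] using this
  have hconv : ConvexOn ℝ Set.univ (fun t : ℝ => s (p + t • (z - p))) := by
    have h := hs.comp_affineMap (AffineMap.lineMap p z)
    have hfun : (s ∘ (AffineMap.lineMap p z : ℝ →ᵃ[ℝ] E)) =
        fun t : ℝ => s (p + t • (z - p)) := by
      funext t
      simp [Function.comp, AffineMap.lineMap_apply, vsub_eq_sub, vadd_eq_add, add_comm]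
    rw [hfun] at h
    simpa using h
  have hslope := hconv.le_slope_of_hasDerivAt (Set.mem_univ (0:ℝ)) (Set.mem_univ (1:ℝ))
    one_pos hφ
  rw [slope_def_field] at hslope
  simp at hslope
  linarith

/-- Three-point inequality for the minimizer of a strongly convex objective over a convex set. -/
lemma aux_three_point (X : Set E) (hXconv : Convex ℝ X) (g : E → ℝ)
    (hg : ConvexOn ℝ Set.univ g) (c : ℝ) (hc : 0 < c) (y x : E) (hx : x ∈ X)
    (hmin : IsMinOn (fun z => g z + c * ‖z - y‖ ^ 2) X x) (z : E) (hz : z ∈ X) :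
    g x + c * ‖x - y‖ ^ 2 + c * ‖z - x‖ ^ 2 ≤ g z + c * ‖z - y‖ ^ 2 := by
  set N := ‖z - x‖ ^ 2 with hNdef
  have hN : 0 ≤ N := by positivity
  set ip := ⟪x - y, z - x⟫ with hipdef
  have hvar : ∀ t : ℝ, 0 < t → t ≤ 1 → g x ≤ g z + 2 * c * ip + c * t * N := by
    intro t ht ht1
    set w := x + t • (z - x) with hwdef
    have hw : w = (1 - t) • x + t • z := by rw [hwdef]; module
    have hwX : w ∈ X := by
      rw [hw]; exact hXconv hx hz (by linarith) ht.le (by ring)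
    have h1 : g x + c * ‖x - y‖ ^ 2 ≤ g w + c * ‖w - y‖ ^ 2 := hmin hwX
    have h2 : g w ≤ (1 - t) * g x + t * g z := by
      rw [hw]
      exact hg.2 (Set.mem_univ x) (Set.mem_univ z) (by linarith) ht.le (by ring)
    have h3 : ‖w - y‖ ^ 2 = ‖x - y‖ ^ 2 + 2 * t * ip + t ^ 2 * N := by
      have harg : w - y = (x - y) + t • (z - x) := by rw [hwdef]; abel
      rw [harg, norm_add_sq_real, real_inner_smul_right, norm_smul]
      simp only [Real.norm_eq_abs, mul_pow, sq_abs]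
      rw [hipdef, hNdef]; ring
    rw [h3] at h1
    have hdiv : t * g x ≤ t * (g z + 2 * c * ip + c * t * N) := by nlinarith [h1, h2]
    exact le_of_mul_le_mul_left hdiv ht
  have hlim : g x ≤ g z + 2 * c * ip := by
    apply le_of_forall_pos_le_add
    intro ε hε
    have hden : 0 < c * N + 1 := by positivity
    set t := min 1 (ε / (c * N + 1)) with htdef
    have ht0 : 0 < t := lt_min one_pos (div_pos hε hden)
    have ht1 : t ≤ 1 := min_le_left _ _
    have h := hvar t ht0 ht1
    have ht2 : t ≤ ε / (c * N + 1) := min_le_right _ _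
    have hbound : c * t * N ≤ ε := by
      have h5 : (c * N + 1) * t ≤ (c * N + 1) * (ε / (c * N + 1)) :=
        mul_le_mul_of_nonneg_left ht2 hden.le
      have h6 : (c * N + 1) * (ε / (c * N + 1)) = ε := by field_simp
      nlinarith [ht0.le, hN, hc.le]
    linarith
  have hexp : ‖z - y‖ ^ 2 = ‖x - y‖ ^ 2 + 2 * ip + N := by
    have harg : z - y = (x - y) + (z - x) := by abel
    rw [harg, norm_add_sq_real, hipdef, hNdef]
  rw [hexp]
  linarith

end Aux

/-- Theorem 1 (explicit form): dynamic regret bound for the online proximal-gradient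
method on time-varying composite convex problems `f_i = s_i + g_i` over a convex set `X`
with diameter at most `R`. -/
theorem dynamic_regret_online_proximal_gradient
    {E : Type*} [NormedAddCommGroup E] [InnerProductSpace ℝ E]
    (X : Set E) (hXne : X.Nonempty) (hXconv : Convex ℝ X)
    (R : ℝ) (hR : 0 < R) (hdiam : ∀ u ∈ X, ∀ v ∈ X, ‖u - v‖ ≤ R)
    (α L : ℝ) (hα : 0 < α) (hL : 0 < L) (hαL : α ≤ 1 / L)
    (K : ℕ)
    (s : ℕ → E → ℝ) (ds : ℕ → E → E)
    (hs_conv : ∀ i ∈ Finset.Icc 1 K, ConvexOn ℝ Set.univ (s i))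
    (hs_diff : ∀ i ∈ Finset.Icc 1 K, ∀ u : E, HasFDerivAt (s i) (innerSL ℝ (ds i u)) u)
    (hdesc : ∀ i ∈ Finset.Icc 1 K, ∀ u v : E,
      s i v ≤ s i u + ⟪ds i u, v - u⟫ + L / 2 * ‖v - u‖ ^ 2)
    (g : ℕ → E → ℝ) (hg_conv : ∀ i ∈ Finset.Icc 1 K, ConvexOn ℝ Set.univ (g i))
    (f : ℕ → E → ℝ) (hf : ∀ i, f i = fun z => s i z + g i z)
    (xstar : ℕ → E) (hxstar0 : xstar 0 ∈ X)
    (hxstar_mem : ∀ i ∈ Finset.Icc 1 K, xstar i ∈ X)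
    (hxstar_min : ∀ i ∈ Finset.Icc 1 K, IsMinOn (f i) X (xstar i))
    (ω : ℕ → ℝ) (hω : ∀ i ∈ Finset.Icc 1 K, ω i = ‖xstar i - xstar (i - 1)‖)
    (x : ℕ → E) (hx0 : x 0 ∈ X)
    (hx_mem : ∀ i ∈ Finset.Icc 1 K, x i ∈ X)
    (hx_min : ∀ i ∈ Finset.Icc 1 K,
      IsMinOn (fun z => g i z + 1 / (2 * α) * ‖z - (x (i - 1) - α • ds i (x (i - 1)))‖ ^ 2)
        X (x i)) :
    ∑ i ∈ Finset.Icc 1 K, (f i (x i) - f i (xstar i)) ≤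
      1 / (2 * α) * ‖x 0 - xstar 0‖ ^ 2
        + R / α * ∑ i ∈ Finset.Icc 1 K, ω i
        + 1 / (2 * α) * ∑ i ∈ Finset.Icc 1 K, ω i ^ 2 := by
  
  have hα' : (0:ℝ) < 2 * α := by linarith
  have hc : (0:ℝ) < 1 / (2 * α) := by positivity
  -- membership at index i - 1
  have hxmem' : ∀ i ∈ Finset.Icc 1 K, x (i - 1) ∈ X := by
    intro i hi
    rcases Nat.eq_zero_or_pos (i - 1) with h | h
    · rw [h]; exact hx0
    · exact hx_mem _ (Finset.mem_Icc.mpr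
        ⟨h, le_trans (Nat.sub_le i 1) (Finset.mem_Icc.mp hi).2⟩)
  have hxstarmem' : ∀ i ∈ Finset.Icc 1 K, xstar (i - 1) ∈ X := by
    intro i hi
    rcases Nat.eq_zero_or_pos (i - 1) with h | h
    · rw [h]; exact hxstar0
    · exact hxstar_mem _ (Finset.mem_Icc.mpr
        ⟨h, le_trans (Nat.sub_le i 1) (Finset.mem_Icc.mp hi).2⟩)
  -- per-step bound
  have step : ∀ i ∈ Finset.Icc 1 K, f i (x i) - f i (xstar i) ≤
      (1 / (2 * α) * ‖xstar (i - 1) - x (i - 1)‖ ^ 2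
        - 1 / (2 * α) * ‖xstar i - x i‖ ^ 2)
      + (R / α * ω i + 1 / (2 * α) * ω i ^ 2) := by
    intro i hi
    have hgrad := aux_grad_ineq (s i) (hs_conv i hi) (ds i (x (i - 1))) (x (i - 1))
      (hs_diff i hi (x (i - 1))) (xstar i)
    have hdesc' := hdesc i hi (x (i - 1)) (x i)
    have h3p := aux_three_point X hXconv (g i) (hg_conv i hi) (1 / (2 * α)) hc
      (x (i - 1) - α • ds i (x (i - 1))) (x i) (hx_mem i hi) (hx_min i hi)
      (xstar i) (hxstar_mem i hi)
    have hexpand : ∀ v : E, ‖v - (x (i - 1) - α • ds i (x (i - 1)))‖ ^ 2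
        = ‖v - x (i - 1)‖ ^ 2 + 2 * α * ⟪ds i (x (i - 1)), v - x (i - 1)⟫
          + α ^ 2 * ‖ds i (x (i - 1))‖ ^ 2 := by
      intro v
      have harg : v - (x (i - 1) - α • ds i (x (i - 1)))
          = (v - x (i - 1)) + α • ds i (x (i - 1)) := by abel
      rw [harg, norm_add_sq_real, real_inner_smul_right, real_inner_comm, norm_smul]
      simp only [Real.norm_eq_abs, mul_pow, sq_abs]
      ring
    rw [hexpand (x i), hexpand (xstar i)] at h3p
    have heq : 1 / (2 * α) * (‖xstar i - x (i - 1)‖ ^ 2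
          + 2 * α * ⟪ds i (x (i - 1)), xstar i - x (i - 1)⟫
          + α ^ 2 * ‖ds i (x (i - 1))‖ ^ 2)
        - 1 / (2 * α) * (‖x i - x (i - 1)‖ ^ 2
          + 2 * α * ⟪ds i (x (i - 1)), x i - x (i - 1)⟫
          + α ^ 2 * ‖ds i (x (i - 1))‖ ^ 2)
        = 1 / (2 * α) * ‖xstar i - x (i - 1)‖ ^ 2
          - 1 / (2 * α) * ‖x i - x (i - 1)‖ ^ 2
          + ⟪ds i (x (i - 1)), xstar i - x (i - 1)⟫
          - ⟪ds i (x (i - 1)), x i - x (i - 1)⟫ := by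
      field_simp
      ring
    have hLc : L / 2 * ‖x i - x (i - 1)‖ ^ 2 ≤ 1 / (2 * α) * ‖x i - x (i - 1)‖ ^ 2 := by
      have hαL' : α * L ≤ 1 := (le_div_iff₀ hL).mp hαL
      have : L / 2 ≤ 1 / (2 * α) := by
        rw [div_le_div_iff₀ (by norm_num) hα']
        nlinarith
      exact mul_le_mul_of_nonneg_right this (by positivity)
    have hkey : s i (x i) + g i (x i) ≤ s i (xstar i) + g i (xstar i)
        + 1 / (2 * α) * ‖xstar i - x (i - 1)‖ ^ 2
        - 1 / (2 * α) * ‖xstar i - x i‖ ^ 2 := by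
      linarith [h3p, heq, hgrad, hdesc', hLc]
    have hωi : ω i = ‖xstar i - xstar (i - 1)‖ := hω i hi
    have hω0 : 0 ≤ ω i := by rw [hωi]; exact norm_nonneg _
    have hdist : ‖xstar i - x (i - 1)‖ ^ 2
        ≤ ‖xstar (i - 1) - x (i - 1)‖ ^ 2 + 2 * R * ω i + ω i ^ 2 := by
      have htri : ‖xstar i - x (i - 1)‖ ≤ ω i + ‖xstar (i - 1) - x (i - 1)‖ := by
        rw [hωi]
        have h' : xstar i - x (i - 1)
            = (xstar i - xstar (i - 1)) + (xstar (i - 1) - x (i - 1)) := by abel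
        rw [h']
        exact norm_add_le _ _
      have hRb : ‖xstar (i - 1) - x (i - 1)‖ ≤ R :=
        hdiam _ (hxstarmem' i hi) _ (hxmem' i hi)
      nlinarith [norm_nonneg (xstar i - x (i - 1)),
        norm_nonneg (xstar (i - 1) - x (i - 1))]
    have hmul : 1 / (2 * α) * ‖xstar i - x (i - 1)‖ ^ 2
        ≤ 1 / (2 * α) * (‖xstar (i - 1) - x (i - 1)‖ ^ 2 + 2 * R * ω i + ω i ^ 2) :=
      mul_le_mul_of_nonneg_left hdist hc.le
    have heq2 : 1 / (2 * α) * (‖xstar (i - 1) - x (i - 1)‖ ^ 2 + 2 * R * ω i + ω i ^ 2)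
        = 1 / (2 * α) * ‖xstar (i - 1) - x (i - 1)‖ ^ 2 + R / α * ω i
          + 1 / (2 * α) * ω i ^ 2 := by
      field_simp
    simp only [hf]
    linarith [hkey, hmul, heq2]
  -- telescoping
  have tel : ∀ n : ℕ, ∑ i ∈ Finset.Icc 1 n,
      (1 / (2 * α) * ‖xstar (i - 1) - x (i - 1)‖ ^ 2
        - 1 / (2 * α) * ‖xstar i - x i‖ ^ 2)
      = 1 / (2 * α) * ‖xstar 0 - x 0‖ ^ 2 - 1 / (2 * α) * ‖xstar n - x n‖ ^ 2 := by
    intro n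
    induction n with
    | zero => simp
    | succ n ih =>
      rw [Finset.sum_Icc_succ_top (Nat.le_add_left 1 n), ih]
      simp only [Nat.add_sub_cancel]
      ring
  have hsum := Finset.sum_le_sum step
  rw [Finset.sum_add_distrib, tel K, Finset.sum_add_distrib,
    ← Finset.mul_sum, ← Finset.mul_sum] at hsum
  have hK0 : (0:ℝ) ≤ 1 / (2 * α) * ‖xstar K - x K‖ ^ 2 := by positivity
  have hrev : ‖xstar 0 - x 0‖ = ‖x 0 - xstar 0‖ := norm_sub_rev _ _
  rw [hrev] at hsum
  linarith
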